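/- arXiv:1905.02445 — 5 statements merged into one kernel-verified Lean document; each statement's English description precedes it below -/
import Mathlib

section
/- Let G ⊆ K_{m,n} be a connected bipartite graph and let A = A₁ ⊔ A₂ be a two-sided maximal independent set. Then H_{A₁} ∩ σ_G^∨ = H_{A₂} ∩ σ_G^∨; that is, a point x ∈ σ_G^∨ satisfies Σ_{v∈A₁} x_v = Σ_{v∈N(A₁)} x_v if and only if it satisfies Σ_{v∈A₂} x_v = Σ_{v∈N(A₂)} x_v. -/
/-!
Common setup: a bipartite graph `G ⊆ K_{m,n}` is encoded by an edge relation
`E : Fin m → Fin n → Prop` (vertex set `V = Fin m ⊕ Fin n`, with `U₁` the left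
summand and `U₂` the right summand).
-/

namespace ToricBipartite

open Sum Finset

variable {m n : ℕ}

/-- The simple graph on `Fin m ⊕ Fin n` determined by the bipartite edge relation `E`. -/
def toGraph (E : Fin m → Fin n → Prop) : SimpleGraph (Fin m ⊕ Fin n) where
  Adj u v :=
    (∃ i j, u = inl i ∧ v = inr j ∧ E i j) ∨ (∃ i j, u = inr j ∧ v = inl i ∧ E i j)
  symm := by
    constructor
    rintro u v (⟨i, j, hu, hv, h⟩ | ⟨i, j, hu, hv, h⟩)
    · exact Or.inr ⟨i, j, hv, hu, h⟩
    · exact Or.inl ⟨i, j, hv, hu, h⟩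
  loopless := by
    constructor
    rintro u (⟨i, j, hu, hv, h⟩ | ⟨i, j, hu, hv, h⟩) <;> rw [hu] at hv <;> simp at hv

/-- The generator `e^i + f^j` of the dual edge cone. -/
def gen (i : Fin m) (j : Fin n) : (Fin m ⊕ Fin n) → ℝ :=
  Pi.single (inl i) 1 + Pi.single (inr j) 1

/-- The set of generators `{e^i + f^j : (i, m+j) ∈ E(G)}` of the dual edge cone. -/
def genSet (E : Fin m → Fin n → Prop) : Set ((Fin m ⊕ Fin n) → ℝ) :=
  {x | ∃ i j, E i j ∧ x = gen i j}

/-- The dual edge cone `σ_G^∨ ⊆ ℝ^{m+n}`: all nonnegative combinations of the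
generators `e^i + f^j` over the edges of `G`. -/
def dualEdgeCone (E : Fin m → Fin n → Prop) : Set ((Fin m ⊕ Fin n) → ℝ) :=
  {x | ∃ c : Fin m → Fin n → ℝ, (∀ i j, 0 ≤ c i j) ∧ (∀ i j, c i j ≠ 0 → E i j) ∧
      x = ∑ i, ∑ j, c i j • gen i j}

/-- The neighbour set `N(A) ⊆ U₂` of a set `A ⊆ U₁`. -/
def nbrR (E : Fin m → Fin n → Prop) [∀ i j, Decidable (E i j)]
    (A : Finset (Fin m)) : Finset (Fin n) :=
  univ.filter fun j => ∃ i ∈ A, E i j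

/-- The neighbour set `N(B) ⊆ U₁` of a set `B ⊆ U₂`. -/
def nbrL (E : Fin m → Fin n → Prop) [∀ i j, Decidable (E i j)]
    (B : Finset (Fin n)) : Finset (Fin m) :=
  univ.filter fun i => ∃ j ∈ B, E i j

/-- `A₁ ⊔ A₂ ⊆ U₁ ⊔ U₂` contains no pair of adjacent vertices (since the graph is
bipartite this says there is no edge between `A₁` and `A₂`). -/
def IsIndepPair (E : Fin m → Fin n → Prop)
    (A₁ : Finset (Fin m)) (A₂ : Finset (Fin n)) : Prop :=
  ∀ i ∈ A₁, ∀ j ∈ A₂, ¬ E i j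

/-- A two-sided independent set `B₁ ⊔ B₂`, with `∅ ≠ B₁ ⊊ U₁` and `∅ ≠ B₂ ⊊ U₂`. -/
def TwoSidedIndep (E : Fin m → Fin n → Prop)
    (B₁ : Finset (Fin m)) (B₂ : Finset (Fin n)) : Prop :=
  B₁.Nonempty ∧ B₁ ≠ univ ∧ B₂.Nonempty ∧ B₂ ≠ univ ∧ IsIndepPair E B₁ B₂

/-- A two-sided *maximal* independent set: two-sided independent, and contained in no
strictly larger independent set of the graph. -/
def TwoSidedMaxIndep (E : Fin m → Fin n → Prop)
    (A₁ : Finset (Fin m)) (A₂ : Finset (Fin n)) : Prop :=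
  TwoSidedIndep E A₁ A₂ ∧
    ∀ B₁ B₂, IsIndepPair E B₁ B₂ → A₁ ⊆ B₁ → A₂ ⊆ B₂ → B₁ = A₁ ∧ B₂ = A₂

/-- Membership in `I_G^(*)`: either a two-sided maximal independent set, or a one-sided
independent set of the form `U_i ∖ {v}` not contained in any two-sided independent set.
A set is encoded as the pair of its parts `(A₁, A₂) = (A ∩ U₁, A ∩ U₂)`. -/
def InIStar (E : Fin m → Fin n → Prop)
    (A₁ : Finset (Fin m)) (A₂ : Finset (Fin n)) : Prop :=
  TwoSidedMaxIndep E A₁ A₂ ∨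
    (A₂ = ∅ ∧ A₁.Nonempty ∧ (∃ v, A₁ = {v}ᶜ) ∧
      ¬ ∃ B₁ B₂, TwoSidedIndep E B₁ B₂ ∧ A₁ ⊆ B₁) ∨
    (A₁ = ∅ ∧ A₂.Nonempty ∧ (∃ v, A₂ = {v}ᶜ) ∧
      ¬ ∃ B₁ B₂, TwoSidedIndep E B₁ B₂ ∧ A₂ ⊆ B₂)

/-- The edge relation of the associated (spanning) subgraph `G{A}` of `A ∈ I_G^(*)`:
for one-sided `A = A₁ ⊆ U₁` the edges of `G[A₁ ⊔ N(A₁)] ⊔ G[(U₁∖A₁) ⊔ (U₂∖N(A₁))]`,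
symmetrically for one-sided `A = A₂ ⊆ U₂`, and for two-sided `A = A₁ ⊔ A₂` the edges of
`G[A₁ ⊔ N(A₁)] ⊔ G[A₂ ⊔ N(A₂)]`. -/
def assoc (E : Fin m → Fin n → Prop) [∀ i j, Decidable (E i j)]
    (A₁ : Finset (Fin m)) (A₂ : Finset (Fin n)) : Fin m → Fin n → Prop := fun i j =>
  E i j ∧
    (if A₂ = ∅ then i ∈ A₁ ∨ j ∉ nbrR E A₁
     else if A₁ = ∅ then j ∈ A₂ ∨ i ∉ nbrL E A₂
     else i ∈ A₁ ∨ j ∈ A₂)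

instance (E : Fin m → Fin n → Prop) [∀ i j, Decidable (E i j)]
    (A₁ : Finset (Fin m)) (A₂ : Finset (Fin n)) (i : Fin m) (j : Fin n) :
    Decidable (assoc E A₁ A₂ i j) := by
  unfold assoc; infer_instance

/-- The number of connected components of the bipartite graph with edge relation `E`
(isolated vertices count as connected components). -/
noncomputable def numComponents (E : Fin m → Fin n → Prop) : ℕ :=
  Nat.card (toGraph E).ConnectedComponent

/-- `A ∈ I_G^(1)`: a first independent set, i.e. an element of `I_G^(*)` whose associated
subgraph `G{A}` has exactly two connected components. -/
def FirstIndep (E : Fin m → Fin n → Prop) [∀ i j, Decidable (E i j)]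
    (A₁ : Finset (Fin m)) (A₂ : Finset (Fin n)) : Prop :=
  InIStar E A₁ A₂ ∧ numComponents (assoc E A₁ A₂) = 2

/-- The supporting hyperplane `H_{A₁}` of a one-sided set `A₁ ⊆ U₁`:
`Σ_{v ∈ A₁} x_v = Σ_{v ∈ N(A₁)} x_v`. -/
def hyp1 (E : Fin m → Fin n → Prop) [∀ i j, Decidable (E i j)]
    (A₁ : Finset (Fin m)) : Set ((Fin m ⊕ Fin n) → ℝ) :=
  {x | ∑ i ∈ A₁, x (inl i) = ∑ j ∈ nbrR E A₁, x (inr j)}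

/-- The supporting hyperplane `H_{A₂}` of a one-sided set `A₂ ⊆ U₂`. -/
def hyp2 (E : Fin m → Fin n → Prop) [∀ i j, Decidable (E i j)]
    (A₂ : Finset (Fin n)) : Set ((Fin m ⊕ Fin n) → ℝ) :=
  {x | ∑ j ∈ A₂, x (inr j) = ∑ i ∈ nbrL E A₂, x (inl i)}

/-- The supporting hyperplane `H_A` of `A = A₁ ⊔ A₂`, taken with respect to a nonempty
one-sided part of `A`. -/
def hypA (E : Fin m → Fin n → Prop) [∀ i j, Decidable (E i j)]
    (A₁ : Finset (Fin m)) (A₂ : Finset (Fin n)) : Set ((Fin m ⊕ Fin n) → ℝ) :=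
  if A₁ = ∅ then hyp2 E A₂ else hyp1 E A₁

/-- Connectivity of the induced subgraph `G[S ⊔ T]` for `S ⊆ U₁`, `T ⊆ U₂`. -/
def InducedConnected (E : Fin m → Fin n → Prop)
    (S : Finset (Fin m)) (T : Finset (Fin n)) : Prop :=
  ((toGraph E).induce
    ((inl '' (S : Set (Fin m)) ∪ inr '' (T : Set (Fin n))) : Set (Fin m ⊕ Fin n))).Connected

/-- The degree (valency) sequence of the bipartite graph with edge relation `E`,
as a vector in `ℝ^{m+n}`. -/
def valVec (E : Fin m → Fin n → Prop) [∀ i j, Decidable (E i j)] :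
    (Fin m ⊕ Fin n) → ℝ :=
  Sum.elim (fun i => ((univ.filter fun j => E i j).card : ℝ))
    (fun j => ((univ.filter fun i => E i j).card : ℝ))

lemma gen_inl (i i' : Fin m) (j : Fin n) :
    gen (m := m) (n := n) i' j (inl i) = if i = i' then 1 else 0 := by
  simp [gen, Pi.single_apply]

lemma gen_inr (j j' : Fin n) (i : Fin m) :
    gen (m := m) (n := n) i j' (inr j) = if j = j' then 1 else 0 := by
  simp [gen, Pi.single_apply]

lemma apply_inl (c : Fin m → Fin n → ℝ) (i : Fin m) :
    (∑ i', ∑ j, c i' j • gen i' j) (inl i) = ∑ j, c i j := by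
  simp [Finset.sum_apply, gen_inl, mul_ite, Finset.sum_ite_eq]

lemma apply_inr (c : Fin m → Fin n → ℝ) (j : Fin n) :
    (∑ i', ∑ j', c i' j' • gen i' j') (inr j) = ∑ i, c i j := by
  rw [Finset.sum_comm]
  simp [Finset.sum_apply, gen_inr, mul_ite, Finset.sum_ite_eq]

lemma nbrR_eq_compl {E : Fin m → Fin n → Prop} [∀ i j, Decidable (E i j)]
    {A₁ : Finset (Fin m)} {A₂ : Finset (Fin n)} (hA : TwoSidedMaxIndep E A₁ A₂) :
    nbrR E A₁ = A₂ᶜ := by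
  ext j
  simp only [nbrR, Finset.mem_filter, Finset.mem_univ, true_and, Finset.mem_compl]
  constructor
  · rintro ⟨i, hi, hij⟩ hj
    exact hA.1.2.2.2.2 i hi j hj hij
  · intro hj
    by_contra h
    push_neg at h
    have hind : IsIndepPair E A₁ (insert j A₂) := by
      intro i hi j' hj'
      rcases Finset.mem_insert.mp hj' with rfl | hj'
      · exact h i hi
      · exact hA.1.2.2.2.2 i hi j' hj'
    have := (hA.2 A₁ (insert j A₂) hind subset_rfl (Finset.subset_insert _ _)).2
    exact hj (this ▸ Finset.mem_insert_self j A₂)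

lemma nbrL_eq_compl {E : Fin m → Fin n → Prop} [∀ i j, Decidable (E i j)]
    {A₁ : Finset (Fin m)} {A₂ : Finset (Fin n)} (hA : TwoSidedMaxIndep E A₁ A₂) :
    nbrL E A₂ = A₁ᶜ := by
  ext i
  simp only [nbrL, Finset.mem_filter, Finset.mem_univ, true_and, Finset.mem_compl]
  constructor
  · rintro ⟨j, hj, hij⟩ hi
    exact hA.1.2.2.2.2 i hi j hj hij
  · intro hi
    by_contra h
    push_neg at h
    have hind : IsIndepPair E (insert i A₁) A₂ := by
      intro i' hi' j hj
      rcases Finset.mem_insert.mp hi' with rfl | hi'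
      · exact h j hj
      · exact hA.1.2.2.2.2 i' hi' j hj
    have := (hA.2 (insert i A₁) A₂ hind (Finset.subset_insert _ _) subset_rfl).1
    exact hi (this ▸ Finset.mem_insert_self i A₁)

lemma hyp1_iff {E : Fin m → Fin n → Prop} [∀ i j, Decidable (E i j)]
    {A₁ : Finset (Fin m)} {A₂ : Finset (Fin n)} (hA : TwoSidedMaxIndep E A₁ A₂)
    (c : Fin m → Fin n → ℝ) (hcE : ∀ i j, c i j ≠ 0 → E i j) :
    (∑ i', ∑ j', c i' j' • gen i' j') ∈ hyp1 E A₁ ↔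
      ∑ i ∈ A₁ᶜ, ∑ j ∈ A₂ᶜ, c i j = 0 := by
  have hN := nbrR_eq_compl hA
  have hzero : ∀ i ∈ A₁, ∀ j ∈ (nbrR E A₁)ᶜ, c i j = 0 := by
    intro i hi j hj
    by_contra hc
    have : j ∈ nbrR E A₁ := by
      simp only [nbrR, Finset.mem_filter, Finset.mem_univ, true_and]
      exact ⟨i, hi, hcE i j hc⟩
    exact (Finset.mem_compl.mp hj) this
  simp only [hyp1, Set.mem_setOf_eq, apply_inl, apply_inr]
  have lhs : ∑ i ∈ A₁, ∑ j, c i j = ∑ i ∈ A₁, ∑ j ∈ nbrR E A₁, c i j := by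
    refine Finset.sum_congr rfl fun i hi => ?_
    rw [← Finset.sum_add_sum_compl (nbrR E A₁)]
    rw [Finset.sum_eq_zero (hzero i hi), add_zero]
  have rhs : ∑ j ∈ nbrR E A₁, ∑ i, c i j =
      (∑ j ∈ nbrR E A₁, ∑ i ∈ A₁, c i j) + ∑ j ∈ nbrR E A₁, ∑ i ∈ A₁ᶜ, c i j := by
    rw [← Finset.sum_add_distrib]
    refine Finset.sum_congr rfl fun j _ => ?_
    rw [Finset.sum_add_sum_compl]
  rw [lhs, rhs, Finset.sum_comm]
  constructor
  · intro h
    have h0 : ∑ j ∈ nbrR E A₁, ∑ i ∈ A₁ᶜ, c i j = 0 := by linarith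
    rw [hN, Finset.sum_comm] at h0
    exact h0
  · intro h
    have h0 : ∑ j ∈ nbrR E A₁, ∑ i ∈ A₁ᶜ, c i j = 0 := by
      rw [hN, Finset.sum_comm]; exact h
    linarith

lemma hyp2_iff {E : Fin m → Fin n → Prop} [∀ i j, Decidable (E i j)]
    {A₁ : Finset (Fin m)} {A₂ : Finset (Fin n)} (hA : TwoSidedMaxIndep E A₁ A₂)
    (c : Fin m → Fin n → ℝ) (hcE : ∀ i j, c i j ≠ 0 → E i j) :
    (∑ i', ∑ j', c i' j' • gen i' j') ∈ hyp2 E A₂ ↔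
      ∑ i ∈ A₁ᶜ, ∑ j ∈ A₂ᶜ, c i j = 0 := by
  have hN := nbrL_eq_compl hA
  have hzero : ∀ j ∈ A₂, ∀ i ∈ (nbrL E A₂)ᶜ, c i j = 0 := by
    intro j hj i hi
    by_contra hc
    have : i ∈ nbrL E A₂ := by
      simp only [nbrL, Finset.mem_filter, Finset.mem_univ, true_and]
      exact ⟨j, hj, hcE i j hc⟩
    exact (Finset.mem_compl.mp hi) this
  simp only [hyp2, Set.mem_setOf_eq, apply_inl, apply_inr]
  have lhs : ∑ j ∈ A₂, ∑ i, c i j = ∑ j ∈ A₂, ∑ i ∈ nbrL E A₂, c i j := by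
    refine Finset.sum_congr rfl fun j hj => ?_
    rw [← Finset.sum_add_sum_compl (nbrL E A₂)]
    rw [Finset.sum_eq_zero (hzero j hj), add_zero]
  have rhs : ∑ i ∈ nbrL E A₂, ∑ j, c i j =
      (∑ i ∈ nbrL E A₂, ∑ j ∈ A₂, c i j) + ∑ i ∈ nbrL E A₂, ∑ j ∈ A₂ᶜ, c i j := by
    rw [← Finset.sum_add_distrib]
    refine Finset.sum_congr rfl fun i _ => ?_
    rw [Finset.sum_add_sum_compl]
  rw [lhs, rhs, Finset.sum_comm]
  constructor
  · intro h
    have h0 : ∑ i ∈ nbrL E A₂, ∑ j ∈ A₂ᶜ, c i j = 0 := by linarith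
    rw [hN] at h0
    exact h0
  · intro h
    have h0 : ∑ i ∈ nbrL E A₂, ∑ j ∈ A₂ᶜ, c i j = 0 := by rw [hN]; exact h
    linarith

/-- For a two-sided maximal independent set `A = A₁ ⊔ A₂` of a connected
bipartite graph `G ⊆ K_{m,n}`, the two supporting hyperplanes cut out the same face:
`H_{A₁} ∩ σ_G^∨ = H_{A₂} ∩ σ_G^∨`. -/
theorem hyp_inter_cone_symm (m n : ℕ) (E : Fin m → Fin n → Prop)
    [∀ i j, Decidable (E i j)] (hconn : (toGraph E).Connected)
    (A₁ : Finset (Fin m)) (A₂ : Finset (Fin n)) (hA : TwoSidedMaxIndep E A₁ A₂) :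
    hyp1 E A₁ ∩ dualEdgeCone E = hyp2 E A₂ ∩ dualEdgeCone E := by
  ext x
  constructor
  · rintro ⟨hx, hcone⟩
    refine ⟨?_, hcone⟩
    obtain ⟨c, hc0, hcE, rfl⟩ := hcone
    exact (hyp2_iff hA c hcE).mpr ((hyp1_iff hA c hcE).mp hx)
  · rintro ⟨hx, hcone⟩
    refine ⟨?_, hcone⟩
    obtain ⟨c, hc0, hcE, rfl⟩ := hcone
    exact (hyp1_iff hA c hcE).mpr ((hyp2_iff hA c hcE).mp hx)

end ToricBipartite
end

section
/- Let G ⊆ K_{m,n} be a connected bipartite graph and let A = A₁ ⊔ A₂ be a two-sided independent set (∅ ≠ A₁ ⊊ U₁, ∅ ≠ A₂ ⊊ U₂). If the ℝ-linear span of H_{A₁} ∩ σ_G^∨ has dimension m+n−2 (i.e., H_{A₁} ∩ σ_G^∨ is a facet of σ_G^∨), then there exists a set A₂' with A₂ ⊆ A₂' ⊊ U₂ such that A' = A₁ ⊔ A₂' is a maximal two-sided independent set of G. -/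
/-!
Common setup: a bipartite graph `G ⊆ K_{m,n}` is encoded by an edge relation
`E : Fin m → Fin n → Prop` (vertex set `V = Fin m ⊕ Fin n`, with `U₁` the left
summand and `U₂` the right summand).
-/

namespace ToricBipartite

open Sum Finset

variable {m n : ℕ}

section Aux

lemma gen_apply_inl (i i' : Fin m) (j : Fin n) :
    gen (n := n) i j (inl i') = if i' = i then 1 else 0 := by
  simp [gen, Pi.single_apply]

lemma gen_apply_inr (i : Fin m) (j j' : Fin n) :
    gen (m := m) i j (inr j') = if j' = j then 1 else 0 := by
  simp [gen, Pi.single_apply]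

lemma cone_eval_inl (c : Fin m → Fin n → ℝ) (i' : Fin m) :
    (∑ i, ∑ j, c i j • gen i j) (inl i') = ∑ j, c i' j := by
  simp only [Finset.sum_apply, Pi.smul_apply, gen_apply_inl, smul_eq_mul, mul_ite, mul_one,
    mul_zero]
  rw [Finset.sum_comm]
  simp

lemma cone_eval_inr (c : Fin m → Fin n → ℝ) (j' : Fin n) :
    (∑ i, ∑ j, c i j • gen i j) (inr j') = ∑ i, c i j' := by
  simp only [Finset.sum_apply, Pi.smul_apply, gen_apply_inr, smul_eq_mul, mul_ite, mul_one,
    mul_zero]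
  simp

/-- Three linear functionals packaged as a map to `ℝ³`. -/
noncomputable def phiMap (E : Fin m → Fin n → Prop) [∀ i j, Decidable (E i j)]
    (A₁ : Finset (Fin m)) (i₀ : Fin m) :
    ((Fin m ⊕ Fin n) → ℝ) →ₗ[ℝ] (Fin 3 → ℝ) :=
  LinearMap.pi ![LinearMap.proj (inl i₀),
    (∑ i ∈ A₁, LinearMap.proj (R := ℝ) (φ := fun _ : Fin m ⊕ Fin n => ℝ) (inl i)) -
      (∑ j ∈ nbrR E A₁, LinearMap.proj (inr j)),
    (∑ i : Fin m, LinearMap.proj (R := ℝ) (φ := fun _ : Fin m ⊕ Fin n => ℝ) (inl i)) -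
      (∑ j : Fin n, LinearMap.proj (inr j))]

lemma phiMap_apply (E : Fin m → Fin n → Prop) [∀ i j, Decidable (E i j)]
    (A₁ : Finset (Fin m)) (i₀ : Fin m) (x : (Fin m ⊕ Fin n) → ℝ) :
    phiMap E A₁ i₀ x = ![x (inl i₀),
      (∑ i ∈ A₁, x (inl i)) - ∑ j ∈ nbrR E A₁, x (inr j),
      (∑ i, x (inl i)) - ∑ j, x (inr j)] := by
  funext k
  fin_cases k <;>
    simp [phiMap, LinearMap.pi_apply, LinearMap.sub_apply, LinearMap.coe_sum,
      Finset.sum_apply, LinearMap.proj_apply]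

lemma mem_nbrR {E : Fin m → Fin n → Prop} [∀ i j, Decidable (E i j)]
    {A₁ : Finset (Fin m)} {j : Fin n} :
    j ∈ nbrR E A₁ ↔ ∃ i ∈ A₁, E i j := by
  simp [nbrR]

lemma inter_subset_ker (E : Fin m → Fin n → Prop) [∀ i j, Decidable (E i j)]
    (A₁ : Finset (Fin m)) (i₀ : Fin m) (hi₀ : i₀ ∉ A₁)
    (hnb : ∀ j, E i₀ j → j ∈ nbrR E A₁) :
    hyp1 E A₁ ∩ dualEdgeCone E ⊆ (LinearMap.ker (phiMap E A₁ i₀) : Set _) := by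
  rintro x ⟨hx1, c, hc0, hcE, rfl⟩
  simp only [hyp1, Set.mem_setOf_eq, cone_eval_inl, cone_eval_inr] at hx1
  -- For `i ∈ A₁` all mass of row `i` lies in `nbrR E A₁`.
  have h1 : ∀ i ∈ A₁, ∑ j, c i j = ∑ j ∈ nbrR E A₁, c i j := by
    intro i hi
    refine (Finset.sum_subset (Finset.subset_univ _) ?_).symm
    intro j _ hj
    by_contra hne
    exact hj (mem_nbrR.mpr ⟨i, hi, hcE i j hne⟩)
  have hx1' : ∑ i ∈ A₁, ∑ j ∈ nbrR E A₁, c i j = ∑ i, ∑ j ∈ nbrR E A₁, c i j := by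
    rw [← Finset.sum_congr rfl h1, hx1, Finset.sum_comm]
  have hsd : ∑ i ∈ univ \ A₁, ∑ j ∈ nbrR E A₁, c i j = 0 := by
    have := Finset.sum_sdiff (f := fun i => ∑ j ∈ nbrR E A₁, c i j)
      (Finset.subset_univ A₁)
    linarith [hx1', this]
  have hrow : ∑ j ∈ nbrR E A₁, c i₀ j = 0 := by
    have hnonneg : ∀ i ∈ univ \ A₁, 0 ≤ ∑ j ∈ nbrR E A₁, c i j := fun i _ =>
      Finset.sum_nonneg fun j _ => hc0 i j
    exact (Finset.sum_eq_zero_iff_of_nonneg hnonneg).mp hsd i₀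
      (Finset.mem_sdiff.mpr ⟨Finset.mem_univ _, hi₀⟩)
  have hc₀ : ∀ j, c i₀ j = 0 := by
    intro j
    by_cases hj : j ∈ nbrR E A₁
    · exact (Finset.sum_eq_zero_iff_of_nonneg fun j _ => hc0 i₀ j).mp hrow j hj
    · by_contra hne
      exact hj (hnb j (hcE i₀ j hne))
  rw [SetLike.mem_coe, LinearMap.mem_ker, phiMap_apply]
  have e1 : (∑ i, ∑ j, c i j • gen i j) (inl i₀) = 0 := by
    rw [cone_eval_inl]
    exact Finset.sum_eq_zero fun j _ => hc₀ j
  have e2 : (∑ i ∈ A₁, (∑ i', ∑ j, c i' j • gen i' j) (inl i)) =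
      ∑ j ∈ nbrR E A₁, (∑ i', ∑ j', c i' j' • gen i' j') (inr j) := by
    simp only [cone_eval_inl, cone_eval_inr]
    exact hx1
  have e3 : (∑ i, (∑ i', ∑ j, c i' j • gen i' j) (inl i)) =
      ∑ j, (∑ i', ∑ j', c i' j' • gen i' j') (inr j) := by
    simp only [cone_eval_inl, cone_eval_inr]
    exact Finset.sum_comm
  funext k
  fin_cases k
  · exact e1
  · exact sub_eq_zero.mpr e2
  · exact sub_eq_zero.mpr e3

lemma phiMap_surjective (E : Fin m → Fin n → Prop) [∀ i j, Decidable (E i j)]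
    (A₁ : Finset (Fin m)) (i₀ a : Fin m) (j₂ : Fin n)
    (ha : a ∈ A₁) (hi₀ : i₀ ∉ A₁) (hj₂ : j₂ ∉ nbrR E A₁) :
    Function.Surjective (phiMap E A₁ i₀) := by
  intro t
  have hia : i₀ ≠ a := fun h => hi₀ (h ▸ ha)
  refine ⟨t 0 • (Pi.single (inl i₀) 1 : (Fin m ⊕ Fin n) → ℝ) +
    t 1 • (Pi.single (inl a) 1 : (Fin m ⊕ Fin n) → ℝ) +
    (t 0 + t 1 - t 2) • (Pi.single (inr j₂) 1 : (Fin m ⊕ Fin n) → ℝ), ?_⟩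
  rw [phiMap_apply]
  funext k
  fin_cases k
  · simp [Pi.single_apply, hia]
  · simp [Pi.single_apply, Finset.sum_add_distrib, mul_ite, Finset.sum_ite_eq',
      ha, hi₀, hj₂]
  · simp [Pi.single_apply, Finset.sum_add_distrib, mul_ite, Finset.sum_ite_eq']

lemma facet_contra (E : Fin m → Fin n → Prop) [∀ i j, Decidable (E i j)]
    (A₁ : Finset (Fin m)) (i₀ a : Fin m) (j₂ : Fin n)
    (ha : a ∈ A₁) (hi₀ : i₀ ∉ A₁) (hj₂ : j₂ ∉ nbrR E A₁)
    (hnb : ∀ j, E i₀ j → j ∈ nbrR E A₁)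
    (hfacet : Module.finrank ℝ (Submodule.span ℝ (hyp1 E A₁ ∩ dualEdgeCone E))
      = m + n - 2) : False := by
  have hker := LinearMap.finrank_range_add_finrank_ker (phiMap E A₁ i₀)
  have hr : LinearMap.range (phiMap E A₁ i₀) = ⊤ :=
    LinearMap.range_eq_top.mpr (phiMap_surjective E A₁ i₀ a j₂ ha hi₀ hj₂)
  rw [hr, finrank_top, Module.finrank_fintype_fun_eq_card,
    Module.finrank_fintype_fun_eq_card] at hker
  simp only [Fintype.card_fin, Fintype.card_sum] at hker
  have hle : Module.finrank ℝ (Submodule.span ℝ (hyp1 E A₁ ∩ dualEdgeCone E)) ≤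
      Module.finrank ℝ (LinearMap.ker (phiMap E A₁ i₀)) :=
    Submodule.finrank_mono (Submodule.span_le.mpr (inter_subset_ker E A₁ i₀ hi₀ hnb))
  rw [hfacet] at hle
  omega

lemma exists_nbr (E : Fin m → Fin n → Prop) (hconn : (toGraph E).Connected)
    (a : Fin m) (j0 : Fin n) : ∃ j, E a j := by
  obtain ⟨w⟩ := hconn.preconnected (inl a) (inr j0)
  cases w with
  | cons h p =>
    rcases h with ⟨i, j, hu, hv, hE⟩ | ⟨i, j, hu, hv, hE⟩
    · exact ⟨j, by rwa [← Sum.inl_injective hu] at hE⟩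
    · simp at hu

end Aux

/-- Let `A = A₁ ⊔ A₂` be a two-sided independent set of a connected
bipartite graph `G ⊆ K_{m,n}`. If `H_{A₁} ∩ σ_G^∨` is a facet of `σ_G^∨` (its linear
span has dimension `m + n - 2`), then there is `A₂'` with `A₂ ⊆ A₂' ⊊ U₂` such that
`A₁ ⊔ A₂'` is a maximal two-sided independent set of `G`. -/
theorem exists_maximal_twoSided_of_facet (m n : ℕ) (E : Fin m → Fin n → Prop)
    [∀ i j, Decidable (E i j)] (hconn : (toGraph E).Connected)
    (A₁ : Finset (Fin m)) (A₂ : Finset (Fin n)) (hA : TwoSidedIndep E A₁ A₂)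
    (hfacet : Module.finrank ℝ (Submodule.span ℝ (hyp1 E A₁ ∩ dualEdgeCone E))
      = m + n - 2) :
    ∃ A₂' : Finset (Fin n), A₂ ⊆ A₂' ∧ TwoSidedMaxIndep E A₁ A₂' := by
  obtain ⟨⟨a, ha⟩, hA1ne, ⟨j₂, hj₂A⟩, hA2ne, hind⟩ := hA
  have hj₂ : j₂ ∉ nbrR E A₁ := by
    rw [mem_nbrR]
    rintro ⟨i, hi, hE⟩
    exact hind i hi j₂ hj₂A hE
  have hsub : A₂ ⊆ (nbrR E A₁)ᶜ := by
    intro j hj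
    rw [Finset.mem_compl, mem_nbrR]
    rintro ⟨i, hi, hE⟩
    exact hind i hi j hj hE
  obtain ⟨jn, hjn⟩ := exists_nbr E hconn a j₂
  have hjnmem : jn ∈ nbrR E A₁ := mem_nbrR.mpr ⟨a, ha, hjn⟩
  have hAind : IsIndepPair E A₁ (nbrR E A₁)ᶜ := by
    intro i hi j hj hE
    exact (Finset.mem_compl.mp hj) (mem_nbrR.mpr ⟨i, hi, hE⟩)
  refine ⟨(nbrR E A₁)ᶜ, hsub, ⟨⟨⟨a, ha⟩, hA1ne, ⟨j₂, hsub hj₂A⟩, ?_, hAind⟩, ?_⟩⟩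
  · intro h
    exact (Finset.mem_compl.mp (h ▸ Finset.mem_univ jn)) hjnmem
  · intro B₁ B₂ hB h1 h2
    have hB₂ : B₂ = (nbrR E A₁)ᶜ := by
      refine subset_antisymm (fun j hj => Finset.mem_compl.mpr fun hmem => ?_) h2
      obtain ⟨i, hi, hE⟩ := mem_nbrR.mp hmem
      exact hB i (h1 hi) j hj hE
    have hB₁ : B₁ = A₁ := by
      refine subset_antisymm (fun i hi => ?_) h1
      by_contra hni
      refine facet_contra E A₁ i a j₂ ha hni hj₂ ?_ hfacet
      intro j hEj
      by_contra hjn'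
      exact hB i hi j (h2 (Finset.mem_compl.mpr hjn')) hEj
    exact ⟨hB₁, hB₂⟩


end ToricBipartite
end

section
/- Let G ⊆ K_{m,n} be a connected bipartite graph and let A ∈ I_G^(1) be a first independent set, with H_A the supporting hyperplane of a nonempty one-sided part of A. Then H_A ∩ σ_G^∨ equals the convex cone generated by {e^i + f^j : (i, m+j) ∈ E(G{A})}; that is, the facet of σ_G^∨ associated to A is exactly the dual edge cone of the associated subgraph G{A}. -/
/-!
Common setup: a bipartite graph `G ⊆ K_{m,n}` is encoded by an edge relation
`E : Fin m → Fin n → Prop` (vertex set `V = Fin m ⊕ Fin n`, with `U₁` the left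
summand and `U₂` the right summand).
-/

namespace ToricBipartite

open Sum Finset

variable {m n : ℕ}

lemma dualEdgeCone_congr {E₁ E₂ : Fin m → Fin n → Prop}
    (h : ∀ i j, E₁ i j ↔ E₂ i j) : dualEdgeCone E₁ = dualEdgeCone E₂ := by
  ext x
  constructor <;> rintro ⟨c, h0, hE, rfl⟩
  · exact ⟨c, h0, fun i j hc => (h i j).mp (hE i j hc), rfl⟩
  · exact ⟨c, h0, fun i j hc => (h i j).mpr (hE i j hc), rfl⟩

lemma sum_gen_apply_inl (c : Fin m → Fin n → ℝ) (i₀ : Fin m) :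
    (∑ i, ∑ j, c i j • gen i j) (inl i₀) = ∑ j, c i₀ j := by
  simp [gen, Pi.single_apply, Finset.sum_add_distrib, Finset.mul_sum, mul_ite]

lemma sum_gen_apply_inr (c : Fin m → Fin n → ℝ) (j₀ : Fin n) :
    (∑ i, ∑ j, c i j • gen i j) (inr j₀) = ∑ i, c i j₀ := by
  simp [gen, Pi.single_apply, Finset.sum_add_distrib, Finset.mul_sum, mul_ite]

/-- Core computation for a one-sided set `A₁ ⊆ U₁`: the hyperplane equation on a
nonnegative combination holds iff the coefficients vanish outside the allowed edges. -/
lemma key1 (E : Fin m → Fin n → Prop) [∀ i j, Decidable (E i j)] (A₁ : Finset (Fin m))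
    (c : Fin m → Fin n → ℝ) (h0 : ∀ i j, 0 ≤ c i j) (hE : ∀ i j, c i j ≠ 0 → E i j) :
    (∑ i ∈ A₁, ∑ j, c i j) = (∑ j ∈ nbrR E A₁, ∑ i, c i j) ↔
      ∀ i j, c i j ≠ 0 → (i ∈ A₁ ∨ j ∉ nbrR E A₁) := by
  have h1 : ∑ i ∈ A₁, ∑ j, c i j = ∑ j ∈ nbrR E A₁, ∑ i ∈ A₁, c i j := by
    rw [Finset.sum_comm]
    refine (Finset.sum_subset (Finset.subset_univ _) fun j _ hj =>
      Finset.sum_eq_zero fun i hi => ?_).symm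
    by_contra hc
    exact hj (by simp only [nbrR, Finset.mem_filter, Finset.mem_univ, true_and]; exact ⟨i, hi, hE i j hc⟩)
  have h2 : ∑ j ∈ nbrR E A₁, ∑ i, c i j =
      (∑ j ∈ nbrR E A₁, ∑ i ∈ A₁, c i j) + ∑ j ∈ nbrR E A₁, ∑ i ∈ A₁ᶜ, c i j := by
    rw [← Finset.sum_add_distrib]
    exact Finset.sum_congr rfl fun j _ => (Finset.sum_add_sum_compl A₁ _).symm
  rw [h1, h2, left_eq_add]
  rw [Finset.sum_eq_zero_iff_of_nonneg fun j _ => Finset.sum_nonneg fun i _ => h0 i j]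
  constructor
  · intro h i j hc
    by_contra hcon
    push_neg at hcon
    have := (Finset.sum_eq_zero_iff_of_nonneg fun i _ => h0 i j).mp (h j hcon.2) i
      (Finset.mem_compl.mpr hcon.1)
    exact hc this
  · intro h j hj
    refine Finset.sum_eq_zero fun i hi => ?_
    by_contra hc
    rcases h i j hc with h' | h'
    · exact Finset.mem_compl.mp hi h'
    · exact h' hj

/-- Symmetric core computation for a one-sided set `A₂ ⊆ U₂`. -/
lemma key2 (E : Fin m → Fin n → Prop) [∀ i j, Decidable (E i j)] (A₂ : Finset (Fin n))
    (c : Fin m → Fin n → ℝ) (h0 : ∀ i j, 0 ≤ c i j) (hE : ∀ i j, c i j ≠ 0 → E i j) :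
    (∑ j ∈ A₂, ∑ i, c i j) = (∑ i ∈ nbrL E A₂, ∑ j, c i j) ↔
      ∀ i j, c i j ≠ 0 → (j ∈ A₂ ∨ i ∉ nbrL E A₂) := by
  have h1 : ∑ j ∈ A₂, ∑ i, c i j = ∑ i ∈ nbrL E A₂, ∑ j ∈ A₂, c i j := by
    rw [Finset.sum_comm]
    refine (Finset.sum_subset (Finset.subset_univ _) fun i _ hi =>
      Finset.sum_eq_zero fun j hj => ?_).symm
    by_contra hc
    exact hi (by simp only [nbrL, Finset.mem_filter, Finset.mem_univ, true_and]; exact ⟨j, hj, hE i j hc⟩)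
  have h2 : ∑ i ∈ nbrL E A₂, ∑ j, c i j =
      (∑ i ∈ nbrL E A₂, ∑ j ∈ A₂, c i j) + ∑ i ∈ nbrL E A₂, ∑ j ∈ A₂ᶜ, c i j := by
    rw [← Finset.sum_add_distrib]
    exact Finset.sum_congr rfl fun i _ => (Finset.sum_add_sum_compl A₂ _).symm
  rw [h1, h2, left_eq_add]
  rw [Finset.sum_eq_zero_iff_of_nonneg fun i _ => Finset.sum_nonneg fun j _ => h0 i j]
  constructor
  · intro h i j hc
    by_contra hcon
    push_neg at hcon
    have := (Finset.sum_eq_zero_iff_of_nonneg fun j _ => h0 i j).mp (h i hcon.2) j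
      (Finset.mem_compl.mpr hcon.1)
    exact hc this
  · intro h i hi
    refine Finset.sum_eq_zero fun j hj => ?_
    by_contra hc
    rcases h i j hc with h' | h'
    · exact Finset.mem_compl.mp hj h'
    · exact h' hi

/-- The facet equality for a one-sided part `A₁ ⊆ U₁`, stated for the abstract
"allowed edges" relation. -/
lemma core1 (E : Fin m → Fin n → Prop) [∀ i j, Decidable (E i j)] (A₁ : Finset (Fin m)) :
    hyp1 E A₁ ∩ dualEdgeCone E =
      dualEdgeCone (fun i j => E i j ∧ (i ∈ A₁ ∨ j ∉ nbrR E A₁)) := by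
  ext x
  simp only [Set.mem_inter_iff, hyp1, dualEdgeCone, Set.mem_setOf_eq]
  constructor
  · rintro ⟨hh, c, h0, hE, rfl⟩
    refine ⟨c, h0, fun i j hc => ⟨hE i j hc, ?_⟩, rfl⟩
    simp only [sum_gen_apply_inl, sum_gen_apply_inr] at hh
    exact (key1 E A₁ c h0 hE).mp hh i j hc
  · rintro ⟨c, h0, hE, rfl⟩
    have hE' : ∀ i j, c i j ≠ 0 → E i j := fun i j hc => (hE i j hc).1
    refine ⟨?_, c, h0, hE', rfl⟩
    simp only [Set.mem_setOf_eq, sum_gen_apply_inl, sum_gen_apply_inr]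
    exact (key1 E A₁ c h0 hE').mpr fun i j hc => (hE i j hc).2
  
/-- The facet equality for a one-sided part `A₂ ⊆ U₂`. -/
lemma core2 (E : Fin m → Fin n → Prop) [∀ i j, Decidable (E i j)] (A₂ : Finset (Fin n)) :
    hyp2 E A₂ ∩ dualEdgeCone E =
      dualEdgeCone (fun i j => E i j ∧ (j ∈ A₂ ∨ i ∉ nbrL E A₂)) := by
  ext x
  simp only [Set.mem_inter_iff, hyp2, dualEdgeCone, Set.mem_setOf_eq]
  constructor
  · rintro ⟨hh, c, h0, hE, rfl⟩
    refine ⟨c, h0, fun i j hc => ⟨hE i j hc, ?_⟩, rfl⟩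
    simp only [sum_gen_apply_inl, sum_gen_apply_inr] at hh
    exact (key2 E A₂ c h0 hE).mp hh i j hc
  · rintro ⟨c, h0, hE, rfl⟩
    have hE' : ∀ i j, c i j ≠ 0 → E i j := fun i j hc => (hE i j hc).1
    refine ⟨?_, c, h0, hE', rfl⟩
    simp only [Set.mem_setOf_eq, sum_gen_apply_inl, sum_gen_apply_inr]
    exact (key2 E A₂ c h0 hE').mpr fun i j hc => (hE i j hc).2

/-- For a two-sided maximal independent set, `A₂ = U₂ ∖ N(A₁)`. -/
lemma maxIndep_right (E : Fin m → Fin n → Prop) [∀ i j, Decidable (E i j)]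
    {A₁ : Finset (Fin m)} {A₂ : Finset (Fin n)} (h : TwoSidedMaxIndep E A₁ A₂) :
    ∀ j, j ∈ A₂ ↔ j ∉ nbrR E A₁ := by
  intro j
  constructor
  · intro hj hjN
    simp only [nbrR, Finset.mem_filter, Finset.mem_univ, true_and] at hjN
    obtain ⟨i, hi, hij⟩ := hjN
    exact h.1.2.2.2.2 i hi j hj hij
  · intro hjN
    have hind : IsIndepPair E A₁ (insert j A₂) := by
      intro i hi j' hj' hij
      rcases Finset.mem_insert.mp hj' with rfl | hj'
      · exact hjN (by simp only [nbrR, Finset.mem_filter, Finset.mem_univ, true_and]; exact ⟨i, hi, hij⟩)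
      · exact h.1.2.2.2.2 i hi j' hj' hij
    have := (h.2 A₁ (insert j A₂) hind subset_rfl (Finset.subset_insert _ _)).2
    rw [← this]
    exact Finset.mem_insert_self _ _

/-- For a first independent set `A ∈ I_G^(1)` of a connected bipartite
graph `G ⊆ K_{m,n}`, the facet `H_A ∩ σ_G^∨` of the dual edge cone is exactly the dual
edge cone of the associated subgraph `G{A}`. -/
theorem facet_eq_dualEdgeCone_assoc (m n : ℕ) (E : Fin m → Fin n → Prop)
    [∀ i j, Decidable (E i j)] (hconn : (toGraph E).Connected)
    (A₁ : Finset (Fin m)) (A₂ : Finset (Fin n)) (hA : FirstIndep E A₁ A₂) :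
    hypA E A₁ A₂ ∩ dualEdgeCone E = dualEdgeCone (assoc E A₁ A₂) := by
  obtain ⟨hstar, -⟩ := hA
  rcases hstar with htwo | ⟨hA2, hA1ne, -, -⟩ | ⟨hA1, hA2ne, -, -⟩
  · -- two-sided maximal independent set
    have hA1ne : A₁ ≠ ∅ := Finset.nonempty_iff_ne_empty.mp htwo.1.1
    have hA2ne : A₂ ≠ ∅ := Finset.nonempty_iff_ne_empty.mp htwo.1.2.2.1
    rw [hypA, if_neg hA1ne, core1 E A₁]
    refine dualEdgeCone_congr fun i j => ?_
    simp only [assoc, if_neg hA2ne, if_neg hA1ne]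
    rw [maxIndep_right E htwo j]
  · -- one-sided, A ⊆ U₁
    have hA1ne' : A₁ ≠ ∅ := Finset.nonempty_iff_ne_empty.mp hA1ne
    rw [hypA, if_neg hA1ne', core1 E A₁]
    refine dualEdgeCone_congr fun i j => ?_
    simp only [assoc, if_pos hA2]
  · -- one-sided, A ⊆ U₂
    have hA2ne' : A₂ ≠ ∅ := Finset.nonempty_iff_ne_empty.mp hA2ne
    rw [hypA, if_pos hA1, core2 E A₂]
    refine dualEdgeCone_congr fun i j => ?_
    simp only [assoc, if_neg hA2ne', if_pos hA1]


end ToricBipartite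
end

section
/- Let G ⊆ K_{m,n} be a connected bipartite graph, let a ≠ a' be vertices of U₁, and suppose A = U₁ ∖ {a} and A' = U₁ ∖ {a'} are first independent sets of G. Then the intersection subgraph G{A} ∩ G{A'} (the spanning subgraph whose edges are the common edges of G{A} and G{A'}) has exactly three connected components (isolated vertices counting as components) — equivalently, the corresponding pair of extremal rays spans a two-dimensional face of the edge cone — if and only if the induced subgraph G[(U₁ ∖ {a,a'}) ⊔ U₂] is connected. -/
/-!
Common setup: a bipartite graph `G ⊆ K_{m,n}` is encoded by an edge relation
`E : Fin m → Fin n → Prop` (vertex set `V = Fin m ⊕ Fin n`, with `U₁` the left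
summand and `U₂` the right summand).
-/

namespace ToricBipartite

open Sum Finset

variable {m n : ℕ}

section Aux

lemma connected_iff_card {V : Type*} (H : SimpleGraph V) :
    H.Connected ↔ Nat.card H.ConnectedComponent = 1 := by
  rw [Nat.card_eq_one_iff_unique]
  constructor
  · intro h
    have := h.nonempty
    exact ⟨h.preconnected.subsingleton_connectedComponent,
      ⟨H.connectedComponentMk (Classical.arbitrary V)⟩⟩
  · rintro ⟨hs, ⟨C⟩⟩
    obtain ⟨v, -⟩ := Quot.exists_rep C
    rw [SimpleGraph.connected_iff]
    refine ⟨fun u w => ?_, ⟨v⟩⟩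
    exact SimpleGraph.ConnectedComponent.exact
      (hs.elim (H.connectedComponentMk u) (H.connectedComponentMk w))

lemma card_components_isolated {V : Type*} [Finite V] (H : SimpleGraph V) (W : Set V)
    (hiso : ∀ v ∉ W, ∀ u, ¬ H.Adj v u) :
    Nat.card H.ConnectedComponent
      = Nat.card (H.induce W).ConnectedComponent + Nat.card ↥(Wᶜ) := by
  have hreach : ∀ v ∉ W, ∀ u, H.Reachable v u → v = u := by
    rintro v hv u ⟨p⟩
    cases p with
    | nil => rfl
    | cons h _ => exact absurd h (hiso v hv _)
  have hwalk : ∀ {u v : V} (p : H.Walk u v) (hu : u ∈ W),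
      ∃ hv : v ∈ W, (H.induce W).Reachable ⟨u, hu⟩ ⟨v, hv⟩ := by
    intro u v p
    induction p with
    | nil => intro hu; exact ⟨hu, SimpleGraph.Reachable.refl _⟩
    | @cons u x v h p ih =>
      intro hu
      have hx : x ∈ W := by
        by_contra hx
        exact hiso _ hx _ h.symm
      obtain ⟨hv, r⟩ := ih hx
      have hadj : (H.induce W).Adj ⟨u, hu⟩ ⟨x, hx⟩ := h
      exact ⟨hv, hadj.reachable.trans r⟩
  let ι : H.induce W →g H := ⟨Subtype.val, fun {u v} h => h⟩
  let g : (H.induce W).ConnectedComponent ⊕ ↥(Wᶜ) → H.ConnectedComponent :=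
    Sum.elim (fun C => C.map ι) (fun v => H.connectedComponentMk v.1)
  have hginj : Function.Injective g := by
    rintro (C | x) (D | y) h
    · obtain ⟨u, rfl⟩ := Quot.exists_rep C
      obtain ⟨v, rfl⟩ := Quot.exists_rep D
      simp only [g, Sum.elim_inl] at h
      have h2 : H.connectedComponentMk ↑u = H.connectedComponentMk ↑v := h
      obtain ⟨p⟩ := SimpleGraph.ConnectedComponent.exact h2
      obtain ⟨hv, r⟩ := hwalk p u.2
      have : (⟨(u : V), u.2⟩ : W) = u := rfl
      rw [this] at r
      have hv' : (⟨(v : V), hv⟩ : W) = v := rfl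
      rw [hv'] at r
      exact congrArg Sum.inl (SimpleGraph.ConnectedComponent.sound r)
    · obtain ⟨u, rfl⟩ := Quot.exists_rep C
      simp only [g, Sum.elim_inl, Sum.elim_inr] at h
      have h2 : H.connectedComponentMk ↑u = H.connectedComponentMk ↑y := h
      have := hreach y.1 y.2 u.1 (SimpleGraph.ConnectedComponent.exact h2.symm)
      exact absurd (this ▸ u.2) y.2
    · obtain ⟨v, rfl⟩ := Quot.exists_rep D
      simp only [g, Sum.elim_inl, Sum.elim_inr] at h
      have h2 : H.connectedComponentMk ↑x = H.connectedComponentMk ↑v := h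
      have := hreach x.1 x.2 v.1 (SimpleGraph.ConnectedComponent.exact h2)
      exact absurd (this ▸ v.2) x.2
    · simp only [g, Sum.elim_inr] at h
      have := hreach x.1 x.2 y.1 (SimpleGraph.ConnectedComponent.exact h)
      exact congrArg Sum.inr (Subtype.ext this)
  have hgsurj : Function.Surjective g := by
    intro C
    obtain ⟨v, rfl⟩ := Quot.exists_rep C
    by_cases hv : v ∈ W
    · exact ⟨Sum.inl ((H.induce W).connectedComponentMk ⟨v, hv⟩), rfl⟩
    · exact ⟨Sum.inr ⟨v, hv⟩, rfl⟩
  rw [← Nat.card_sum]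
  exact (Nat.card_congr (Equiv.ofBijective g ⟨hginj, hgsurj⟩)).symm

lemma toGraph_congr {m n : ℕ} {E₁ E₂ : Fin m → Fin n → Prop}
    (h : ∀ i j, E₁ i j ↔ E₂ i j) : toGraph E₁ = toGraph E₂ := by
  ext u v
  constructor <;> rintro (⟨i, j, hu, hv, he⟩ | ⟨i, j, hu, hv, he⟩)
  · exact Or.inl ⟨i, j, hu, hv, (h i j).mp he⟩
  · exact Or.inr ⟨i, j, hu, hv, (h i j).mp he⟩
  · exact Or.inl ⟨i, j, hu, hv, (h i j).mpr he⟩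
  · exact Or.inr ⟨i, j, hu, hv, (h i j).mpr he⟩

lemma nbrR_eq_univ {m n : ℕ} (E : Fin m → Fin n → Prop) [∀ i j, Decidable (E i j)]
    (hconn : (toGraph E).Connected) (a b : Fin m) (hab : b ≠ a)
    (hn : ¬ ∃ B₁ B₂, TwoSidedIndep E B₁ B₂ ∧ ({a}ᶜ : Finset (Fin m)) ⊆ B₁) :
    nbrR E ({a}ᶜ) = univ := by
  have hbmem : b ∈ ({a}ᶜ : Finset (Fin m)) := by simp [hab]
  have hbnbr : ∃ j, E b j := by
    obtain ⟨p⟩ := hconn.preconnected (inl b) (inl a)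
    cases p with
    | nil => exact absurd rfl hab
    | cons h p =>
      rcases h with ⟨i, j, hu, hv, he⟩ | ⟨i, j, hu, hv, he⟩
      · obtain rfl : b = i := inl_injective hu
        exact ⟨j, he⟩
      · simp at hu
  obtain ⟨j₀, hj₀⟩ := hbnbr
  have hj₀mem : j₀ ∈ nbrR E ({a}ᶜ) := by
    simp only [nbrR, Finset.mem_filter, Finset.mem_univ, true_and]
    exact ⟨b, hbmem, hj₀⟩
  rw [Finset.eq_univ_iff_forall]
  by_contra h0
  push_neg at h0
  obtain ⟨j₁, hj₁⟩ := h0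
  refine hn ⟨{a}ᶜ, (nbrR E ({a}ᶜ))ᶜ,
    ⟨⟨b, hbmem⟩, ?_, ⟨j₁, Finset.mem_compl.2 hj₁⟩, ?_, ?_⟩, subset_rfl⟩
  · intro hu
    have : a ∈ ({a}ᶜ : Finset (Fin m)) := by rw [hu]; exact Finset.mem_univ a
    simp at this
  · intro hu
    have : j₀ ∈ ((nbrR E ({a}ᶜ))ᶜ : Finset (Fin n)) := by rw [hu]; exact Finset.mem_univ _
    exact absurd hj₀mem (Finset.mem_compl.1 this)
  · intro i hi j hj hEij
    refine (Finset.mem_compl.1 hj) ?_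
    simp only [nbrR, Finset.mem_filter, Finset.mem_univ, true_and]
    exact ⟨i, hi, hEij⟩

end Aux

/-- Let `A = U₁ ∖ {a}` and `A' = U₁ ∖ {a'}` (with `a ≠ a'`) be first
independent sets of a connected bipartite graph `G ⊆ K_{m,n}`. Then the intersection
subgraph `G{A} ∩ G{A'}` has exactly three connected components (equivalently, the
corresponding pair of extremal rays spans a 2-face of the edge cone) if and only if the
induced subgraph `G[(U₁ ∖ {a, a'}) ⊔ U₂]` is connected. -/
theorem two_face_AA (m n : ℕ) (E : Fin m → Fin n → Prop)
    [∀ i j, Decidable (E i j)] (hconn : (toGraph E).Connected)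
    (a a' : Fin m) (hne : a ≠ a')
    (hA : FirstIndep E ({a}ᶜ) ∅) (hA' : FirstIndep E ({a'}ᶜ) ∅) :
    numComponents (fun i j => assoc E ({a}ᶜ) ∅ i j ∧ assoc E ({a'}ᶜ) ∅ i j) = 3 ↔
      InducedConnected E ({a, a'} : Finset (Fin m))ᶜ Finset.univ := by
  classical
  have hma : a' ∈ ({a}ᶜ : Finset (Fin m)) := by simp [Ne.symm hne]
  have hma' : a ∈ ({a'}ᶜ : Finset (Fin m)) := by simp [hne]
  have hn1 : ¬ ∃ B₁ B₂, TwoSidedIndep E B₁ B₂ ∧ ({a}ᶜ : Finset (Fin m)) ⊆ B₁ := by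
    rcases hA.1 with ⟨⟨-, -, h2, -, -⟩, -⟩ | ⟨-, -, -, h⟩ | ⟨h, -, -, -⟩
    · exact absurd h2 (by simp)
    · exact h
    · exact absurd (h ▸ hma) (Finset.notMem_empty a')
  have hn2 : ¬ ∃ B₁ B₂, TwoSidedIndep E B₁ B₂ ∧ ({a'}ᶜ : Finset (Fin m)) ⊆ B₁ := by
    rcases hA'.1 with ⟨⟨-, -, h2, -, -⟩, -⟩ | ⟨-, -, -, h⟩ | ⟨h, -, -, -⟩
    · exact absurd h2 (by simp)
    · exact h
    · exact absurd (h ▸ hma') (Finset.notMem_empty a)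
  have hnbr : nbrR E ({a}ᶜ) = univ := nbrR_eq_univ E hconn a a' (Ne.symm hne) hn1
  have hnbr' : nbrR E ({a'}ᶜ) = univ := nbrR_eq_univ E hconn a' a hne hn2
  have hrel : ∀ i j, ((assoc E ({a}ᶜ) ∅ i j ∧ assoc E ({a'}ᶜ) ∅ i j)) ↔
      (E i j ∧ i ≠ a ∧ i ≠ a') := by
    intro i j
    simp only [assoc, if_pos rfl, hnbr, hnbr', Finset.mem_univ, not_true_eq_false, or_false,
      Finset.mem_compl, Finset.mem_singleton]
    tauto
  set Wf : Set (Fin m ⊕ Fin n) :=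
    ((inl '' ((({a, a'} : Finset (Fin m))ᶜ : Finset (Fin m)) : Set (Fin m))
      ∪ inr '' ((univ : Finset (Fin n)) : Set (Fin n))) : Set (Fin m ⊕ Fin n)) with hWf
  have hmemW : ∀ v, v ∈ Wf ↔ v ≠ inl a ∧ v ≠ inl a' := by
    rintro (i | j) <;> simp [hWf] <;> tauto
  have hiso : ∀ v ∉ Wf, ∀ u,
      ¬ (toGraph (fun i j => E i j ∧ i ≠ a ∧ i ≠ a')).Adj v u := by
    intro v hv u hadj
    rcases hadj with ⟨i, j, h1, h2, he, hia, hia'⟩ | ⟨i, j, h1, h2, he, hia, hia'⟩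
    · refine hv ((hmemW v).2 ⟨?_, ?_⟩) <;> rw [h1] <;> simp [hia, hia']
    · refine hv ((hmemW v).2 ⟨?_, ?_⟩) <;> rw [h1] <;> simp
  have hind : (toGraph (fun i j => E i j ∧ i ≠ a ∧ i ≠ a')).induce Wf
      = (toGraph E).induce Wf := by
    ext u v
    simp only [SimpleGraph.comap_adj, Function.Embedding.coe_subtype]
    constructor
    · rintro (⟨i, j, h1, h2, he, -, -⟩ | ⟨i, j, h1, h2, he, -, -⟩)
      · exact Or.inl ⟨i, j, h1, h2, he⟩
      · exact Or.inr ⟨i, j, h1, h2, he⟩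
    · rintro (⟨i, j, h1, h2, he⟩ | ⟨i, j, h1, h2, he⟩)
      · have hu := (hmemW ↑u).1 u.2
        rw [h1] at hu
        refine Or.inl ⟨i, j, h1, h2, he, ?_, ?_⟩
        · intro hia; exact hu.1 (by rw [hia])
        · intro hia; exact hu.2 (by rw [hia])
      · have hv := (hmemW ↑v).1 v.2
        rw [h2] at hv
        refine Or.inr ⟨i, j, h1, h2, he, ?_, ?_⟩
        · intro hia; exact hv.1 (by rw [hia])
        · intro hia; exact hv.2 (by rw [hia])
  have hWc : Nat.card ↥(Wfᶜ) = 2 := by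
    have hcompl : Wfᶜ = ({inl a, inl a'} : Set (Fin m ⊕ Fin n)) := by
      ext v
      simp only [Set.mem_compl_iff, hmemW v, Set.mem_insert_iff, Set.mem_singleton_iff]
      tauto
    rw [hcompl, Nat.card_coe_set_eq, Set.ncard_pair (by simpa using hne)]
  have hEq : numComponents (fun i j => assoc E ({a}ᶜ) ∅ i j ∧ assoc E ({a'}ᶜ) ∅ i j)
      = numComponents (fun i j => E i j ∧ i ≠ a ∧ i ≠ a') := by
    unfold numComponents
    rw [toGraph_congr hrel]
  rw [hEq]
  unfold numComponents InducedConnected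
  rw [← hWf, card_components_isolated _ Wf hiso, hWc, hind, connected_iff_card]
  omega

end ToricBipartite
end

section
/- Let G ⊆ K_{m,n} be a connected bipartite graph, let a ∈ U₁ and b ∈ U₂, and suppose A = U₁ ∖ {a} and B = U₂ ∖ {b} are first independent sets of G. Then the intersection subgraph G{A} ∩ G{B} (the spanning subgraph whose edges are the common edges of G{A} and G{B}) has exactly three connected components (isolated vertices counting as components) — equivalently, the corresponding pair of extremal rays spans a two-dimensional face of the edge cone — if and only if the induced subgraph G[(U₁ ∖ {a}) ⊔ (U₂ ∖ {b})] is connected. -/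
/-!
Common setup: a bipartite graph `G ⊆ K_{m,n}` is encoded by an edge relation
`E : Fin m → Fin n → Prop` (vertex set `V = Fin m ⊕ Fin n`, with `U₁` the left
summand and `U₂` the right summand).
-/

namespace ToricBipartite

open Sum Finset

variable {m n : ℕ}

section CompCount
open SimpleGraph


variable {V : Type*} (G : SimpleGraph V)

lemma isolated_reachable {x : V} (hx : ∀ w, ¬ G.Adj x w) {u : V}
    (h : G.Reachable x u) : x = u := by
  obtain ⟨p⟩ := h
  cases p with
  | nil => rfl
  | cons h' _ => exact absurd h' (hx _)

lemma walk_induce (S : Set V) (hS : ∀ u w, G.Adj u w → w ∈ S) :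
    ∀ {u v : V} (_ : G.Walk u v) (hu : u ∈ S) (hv : v ∈ S),
      (G.induce S).Reachable ⟨u, hu⟩ ⟨v, hv⟩ := by
  intro u v p
  induction p with
  | nil => intro hu hv; exact Reachable.refl _
  | @cons a c bb h' p ih =>
      intro hu hv
      exact (SimpleGraph.Adj.reachable
        (by exact h' : (G.induce S).Adj ⟨a, hu⟩ ⟨c, hS a c h'⟩)).trans (ih (hS a c h') hv)

lemma reach_induce (S : Set V) (hS : ∀ u w, G.Adj u w → w ∈ S)
    {u v : V} (hu : u ∈ S) (hv : v ∈ S) (h : G.Reachable u v) :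
    (G.induce S).Reachable ⟨u, hu⟩ ⟨v, hv⟩ := by
  obtain ⟨p⟩ := h
  exact walk_induce G S hS p hu hv

/-- If `x ≠ y` are isolated vertices of a finite graph `G`, the number of connected
components of `G` is two more than that of the induced graph on the other vertices. -/
lemma card_components_isolated_s15 [Finite V] {x y : V} (hxy : x ≠ y)
    (hx : ∀ w, ¬ G.Adj x w) (hy : ∀ w, ¬ G.Adj y w) :
    Nat.card G.ConnectedComponent
      = Nat.card ((G.induce {v | v ≠ x ∧ v ≠ y}).ConnectedComponent) + 2 := by
  classical
  set S : Set V := {v | v ≠ x ∧ v ≠ y} with hSdef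
  set H := G.induce S with hH
  have hS : ∀ u w, G.Adj u w → w ∈ S := by
    intro u w h
    constructor
    · rintro rfl; exact hx u h.symm
    · rintro rfl; exact hy u h.symm
  let φ : H →g G := ⟨Subtype.val, fun {a b} h => h⟩
  let g : Option (Option H.ConnectedComponent) → G.ConnectedComponent := fun o =>
    match o with
    | none => G.connectedComponentMk x
    | some none => G.connectedComponentMk y
    | some (some d) => d.map φ
  have hmapne : ∀ (v : V) (hv : v ∈ S),
      (H.connectedComponentMk ⟨v, hv⟩).map φ = G.connectedComponentMk v := fun _ _ => rfl
  have hginj : Function.Injective g := by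
    rintro (_ | _ | d) (_ | _ | d') h
    · rfl
    · exact absurd (isolated_reachable G hx (ConnectedComponent.eq.mp h)) hxy
    · obtain ⟨⟨v, hv⟩, rfl⟩ := Quot.exists_rep d'
      exact absurd (isolated_reachable G hx (ConnectedComponent.eq.mp h)) (Ne.symm hv.1)
    · exact absurd (isolated_reachable G hy (ConnectedComponent.eq.mp h)) (Ne.symm hxy)
    · rfl
    · obtain ⟨⟨v, hv⟩, rfl⟩ := Quot.exists_rep d'
      exact absurd (isolated_reachable G hy (ConnectedComponent.eq.mp h)) (Ne.symm hv.2)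
    · obtain ⟨⟨v, hv⟩, rfl⟩ := Quot.exists_rep d
      exact absurd (isolated_reachable G hx (ConnectedComponent.eq.mp h.symm)) (Ne.symm hv.1)
    · obtain ⟨⟨v, hv⟩, rfl⟩ := Quot.exists_rep d
      exact absurd (isolated_reachable G hy (ConnectedComponent.eq.mp h.symm)) (Ne.symm hv.2)
    · obtain ⟨⟨v, hv⟩, rfl⟩ := Quot.exists_rep d
      obtain ⟨⟨w, hw⟩, rfl⟩ := Quot.exists_rep d'
      have : G.Reachable v w := ConnectedComponent.eq.mp h
      have := reach_induce G S hS hv hw this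
      exact congrArg (some ∘ some) (ConnectedComponent.sound this)
  have hgsurj : Function.Surjective g := by
    refine ConnectedComponent.ind fun v => ?_
    by_cases h1 : v = x
    · exact ⟨none, by simp [g, h1]⟩
    by_cases h2 : v = y
    · exact ⟨some none, by simp [g, h2]⟩
    · exact ⟨some (some (H.connectedComponentMk ⟨v, h1, h2⟩)), rfl⟩
  rw [← Nat.card_eq_of_bijective g ⟨hginj, hgsurj⟩]
  have : Finite H.ConnectedComponent := Quot.finite _
  cases nonempty_fintype H.ConnectedComponent
  simp [Nat.card_eq_fintype_card]

lemma connected_iff_card_components (hV : Nonempty V) :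
    G.Connected ↔ Nat.card G.ConnectedComponent = 1 := by
  rw [Nat.card_eq_one_iff_unique]
  constructor
  · intro h
    exact ⟨h.preconnected.subsingleton_connectedComponent,
      ⟨G.connectedComponentMk hV.some⟩⟩
  · rintro ⟨hs, -⟩
    rw [connected_iff]
    refine ⟨fun u v => ?_, hV⟩
    exact ConnectedComponent.eq.mp
      (hs.elim (G.connectedComponentMk u) (G.connectedComponentMk v))

end CompCount

/-- Let `A = U₁ ∖ {a}` and `B = U₂ ∖ {b}` be first independent sets of a
connected bipartite graph `G ⊆ K_{m,n}`. Then the intersection subgraph `G{A} ∩ G{B}`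
has exactly three connected components (equivalently, the corresponding pair of extremal
rays spans a 2-face of the edge cone) if and only if the induced subgraph
`G[(U₁ ∖ {a}) ⊔ (U₂ ∖ {b})]` is connected. -/
theorem two_face_AB (m n : ℕ) (E : Fin m → Fin n → Prop)
    [∀ i j, Decidable (E i j)] (hconn : (toGraph E).Connected)
    (a : Fin m) (b : Fin n)
    (hA : FirstIndep E ({a}ᶜ) ∅) (hB : FirstIndep E ∅ ({b}ᶜ)) :
    numComponents (fun i j => assoc E ({a}ᶜ) ∅ i j ∧ assoc E ∅ ({b}ᶜ) i j) = 3 ↔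
      InducedConnected E ({a}ᶜ) ({b}ᶜ) := by
  classical
  -- Extract the one-sided branch of `InIStar` for `A` and `B`.
  have hA2 : ({a}ᶜ : Finset (Fin m)).Nonempty ∧
      ¬ ∃ B₁ B₂, TwoSidedIndep E B₁ B₂ ∧ ({a}ᶜ : Finset (Fin m)) ⊆ B₁ := by
    rcases hA.1 with h | h | h
    · exact absurd h.1.2.2.1 (by simp)
    · exact ⟨h.2.1, h.2.2.2⟩
    · exact absurd h.2.1 (by simp)
  have hB2 : ({b}ᶜ : Finset (Fin n)).Nonempty ∧
      ¬ ∃ B₁ B₂, TwoSidedIndep E B₁ B₂ ∧ ({b}ᶜ : Finset (Fin n)) ⊆ B₂ := by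
    rcases hB.1 with h | h | h
    · exact absurd h.1.1 (by simp)
    · exact absurd h.2.1 (by simp)
    · exact ⟨h.2.1, h.2.2.2⟩
  obtain ⟨a', ha'⟩ := hA2.1
  obtain ⟨b', hb'⟩ := hB2.1
  rw [Finset.mem_compl, Finset.mem_singleton] at ha' hb'
  have hacu : ({a}ᶜ : Finset (Fin m)) ≠ univ := fun h => by
    have := h ▸ Finset.mem_univ a; simp at this
  have hbcu : ({b}ᶜ : Finset (Fin n)) ≠ univ := fun h => by
    have := h ▸ Finset.mem_univ b; simp at this
  have hbcne : ({b}ᶜ : Finset (Fin n)) ≠ ∅ := Finset.nonempty_iff_ne_empty.mp hB2.1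
  -- `N(U₁ ∖ {a}) = U₂`.
  have hnbrR : nbrR E ({a}ᶜ) = univ := by
    by_contra hne
    obtain ⟨j, hj⟩ : ∃ j, j ∉ nbrR E ({a}ᶜ) := by
      by_contra h; push_neg at h
      exact hne (Finset.eq_univ_iff_forall.mpr h)
    refine hA2.2 ⟨{a}ᶜ, {j}, ⟨hA2.1, hacu, Finset.singleton_nonempty j, ?_, ?_⟩, subset_rfl⟩
    · intro h
      have h1 : b' = j := Finset.mem_singleton.mp (h ▸ Finset.mem_univ b')
      have h2 : b = j := Finset.mem_singleton.mp (h ▸ Finset.mem_univ b)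
      exact hb' (h1.trans h2.symm)
    · intro i hi j' hj' hE
      rw [Finset.mem_singleton] at hj'; subst hj'
      exact hj (by simp only [nbrR, Finset.mem_filter, Finset.mem_univ, true_and]; exact ⟨i, hi, hE⟩)
  -- `N(U₂ ∖ {b}) = U₁`.
  have hnbrL : nbrL E ({b}ᶜ) = univ := by
    by_contra hne
    obtain ⟨i, hi⟩ : ∃ i, i ∉ nbrL E ({b}ᶜ) := by
      by_contra h; push_neg at h
      exact hne (Finset.eq_univ_iff_forall.mpr h)
    refine hB2.2 ⟨{i}, {b}ᶜ, ⟨Finset.singleton_nonempty i, ?_, hB2.1, hbcu, ?_⟩, subset_rfl⟩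
    · intro h
      have h1 : a' = i := Finset.mem_singleton.mp (h ▸ Finset.mem_univ a')
      have h2 : a = i := Finset.mem_singleton.mp (h ▸ Finset.mem_univ a)
      exact ha' (h1.trans h2.symm)
    · intro i' hi' j hj hE
      rw [Finset.mem_singleton] at hi'; subst hi'
      exact hi (by simp only [nbrL, Finset.mem_filter, Finset.mem_univ, true_and]; exact ⟨j, hj, hE⟩)
  -- The intersection edge relation is `E i j ∧ i ≠ a ∧ j ≠ b`.
  have hrel : (fun i j => assoc E ({a}ᶜ) ∅ i j ∧ assoc E ∅ ({b}ᶜ) i j)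
      = fun i j => E i j ∧ i ≠ a ∧ j ≠ b := by
    funext i j
    apply propext
    unfold assoc
    rw [if_pos rfl, if_neg hbcne, if_pos rfl, hnbrR, hnbrL]
    simp only [Finset.mem_compl, Finset.mem_singleton, Finset.mem_univ, not_true_eq_false,
      or_false]
    tauto
  rw [hrel]
  set E'' : Fin m → Fin n → Prop := fun i j => E i j ∧ i ≠ a ∧ j ≠ b with hE''
  set S : Set (Fin m ⊕ Fin n) := {v | v ≠ inl a ∧ v ≠ inr b} with hSdef
  have hxy : (inl a : Fin m ⊕ Fin n) ≠ inr b := by simp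
  have hx : ∀ w, ¬ (toGraph E'').Adj (inl a) w := by
    rintro w (⟨i, j, hu, hv, h⟩ | ⟨i, j, hu, hv, h⟩)
    · rw [Sum.inl.injEq] at hu; exact h.2.1 hu.symm
    · exact Sum.inl_ne_inr hu
  have hy : ∀ w, ¬ (toGraph E'').Adj (inr b) w := by
    rintro w (⟨i, j, hu, hv, h⟩ | ⟨i, j, hu, hv, h⟩)
    · exact Sum.inr_ne_inl hu
    · rw [Sum.inr.injEq] at hu; exact h.2.2 hu.symm
  have hcard := card_components_isolated_s15 (toGraph E'') hxy hx hy
  -- The induced graphs agree.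
  have hind : (toGraph E'').induce S = (toGraph E).induce S := by
    ext ⟨u, hu⟩ ⟨v, hv⟩
    show (toGraph E'').Adj u v ↔ (toGraph E).Adj u v
    rw [hSdef] at hu hv
    constructor
    · rintro (⟨i, j, rfl, rfl, h⟩ | ⟨i, j, rfl, rfl, h⟩)
      · exact Or.inl ⟨i, j, rfl, rfl, h.1⟩
      · exact Or.inr ⟨i, j, rfl, rfl, h.1⟩
    · rintro (⟨i, j, rfl, rfl, h⟩ | ⟨i, j, rfl, rfl, h⟩)
      · exact Or.inl ⟨i, j, rfl, rfl, h, by simpa using hu.1, by simpa using hv.2⟩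
      · exact Or.inr ⟨i, j, rfl, rfl, h, by simpa using hv.1, by simpa using hu.2⟩
  -- The vertex set of the induced subgraph.
  have hset : ((inl '' (({a}ᶜ : Finset (Fin m)) : Set (Fin m)) ∪
      inr '' (({b}ᶜ : Finset (Fin n)) : Set (Fin n))) : Set (Fin m ⊕ Fin n)) = S := by
    rw [hSdef]
    ext (i | j) <;> simp
  have hne : Nonempty S := ⟨⟨inl a', by simp [hSdef, ha']⟩⟩
  rw [hind] at hcard
  rw [InducedConnected, hset,
    connected_iff_card_components ((toGraph E).induce S) hne,
    numComponents, hcard]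
  omega


end ToricBipartite
end
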